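/- Let α be strictly increasing with α_n > 1 and α_n → ∞. The following assertions are equivalent: (a) the differentiation operator D, defined by (Dx)_n := n·x_{n+1}, maps Λ₀(α) into itself and is continuous; (b) for each k ≥ 1 there exist l > k and M > 0 such that n·e^{-α_n/k} ≤ M·e^{-α_{n+1}/l} for all n ≥ 1; (c) lim_{n→∞} (log n)/α_n = 0 and limsup_{n→∞} α_{n+1}/α_n < ∞. -/

import Mathlib

open Filter Finset Topology

noncomputable section

/-- The weight `w_k(n) = e^{-alpha_n / k}`.  Indices are shifted by one: the natural
numbers `k n : Nat` represent the indices `k+1` and `n+1` (both running from `1`). -/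
def wt (a : ℕ → ℝ) (k n : ℕ) : ℝ := Real.exp (-(a n) / ((k : ℝ) + 1))

/-- Membership in the power series space of finite type `Λ₀(α)`:
`x ∈ Λ₀(α)` iff `w_k(n)|x_n| → 0` for every `k ≥ 1`. -/
def memLambda (a : ℕ → ℝ) (x : ℕ → ℂ) : Prop :=
  ∀ k : ℕ, Tendsto (fun n => wt a k n * ‖x n‖) atTop (𝓝 0)

/-- The norm `p_k(x) = sup_n w_k(n)|x_n|` generating the Fréchet topology of `Λ₀(α)`. -/
def pk (a : ℕ → ℝ) (k : ℕ) (x : ℕ → ℂ) : ℝ := ⨆ n : ℕ, wt a k n * ‖x n‖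

/-- The discrete Cesàro operator `(C x)_n = (x_1 + ⋯ + x_n)/n` (0-indexed). -/
def cesaro (x : ℕ → ℂ) : ℕ → ℂ := fun n => (∑ i ∈ Finset.range (n + 1), x i) / ((n : ℂ) + 1)

/-- The differentiation operator `D(x_1,x_2,x_3,…) = (x_2, 2x_3, 3x_4,…)` (0-indexed). -/
def diffOp (x : ℕ → ℂ) : ℕ → ℂ := fun n => ((n : ℂ) + 1) * x (n + 1)

lemma wt_pos (a : ℕ → ℝ) (k n : ℕ) : 0 < wt a k n := Real.exp_pos _

lemma wt_mono (a : ℕ → ℝ) (h1 : ∀ n, 1 < a n) {k l : ℕ} (hkl : k ≤ l) (n : ℕ) :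
    wt a k n ≤ wt a l n := by
  have ha : (0:ℝ) < a n := lt_trans one_pos (h1 n)
  apply Real.exp_le_exp.2
  rw [neg_div, neg_div, neg_le_neg_iff]
  apply div_le_div_of_nonneg_left ha.le (by positivity)
  exact_mod_cast Nat.succ_le_succ hkl

lemma log_wt (a : ℕ → ℝ) (k n : ℕ) : Real.log (wt a k n) = -(a n) / ((k:ℝ)+1) :=
  Real.log_exp _

def unitVec (m : ℕ) : ℕ → ℂ := fun j => if j = m then 1 else 0

lemma memLambda_unitVec (a : ℕ → ℝ) (m : ℕ) : memLambda a (unitVec m) := by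
  intro k
  apply Tendsto.congr' _ tendsto_const_nhds
  filter_upwards [eventually_ge_atTop (m+1)] with n hn
  have : n ≠ m := by omega
  simp [unitVec, this]

lemma pk_unitVec (a : ℕ → ℝ) (k m : ℕ) : pk a k (unitVec m) = wt a k m := by
  have hb : ∀ j, wt a k j * ‖unitVec m j‖ ≤ wt a k m := by
    intro j
    by_cases h : j = m
    · subst h; simp [unitVec]
    · simp [unitVec, h, (wt_pos a k m).le]
  refine le_antisymm (ciSup_le hb) ?_
  have := le_ciSup ⟨wt a k m, by rintro _ ⟨j, rfl⟩; exact hb j⟩ m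
    (f := fun j => wt a k j * ‖unitVec m j‖)
  simpa [unitVec, pk] using this

lemma abs_diffOp (x : ℕ → ℂ) (n : ℕ) :
    ‖diffOp x n‖ = ((n:ℝ)+1) * ‖x (n+1)‖ := by
  rw [diffOp, norm_mul]
  congr 1
  have : ((n:ℂ)+1) = ((n+1 : ℕ) : ℂ) := by push_cast; ring
  rw [this, Complex.norm_natCast]
  push_cast; ring

lemma pk_diffOp_unitVec (a : ℕ → ℝ) (k m : ℕ) :
    pk a k (diffOp (unitVec (m+1))) = ((m:ℝ)+1) * wt a k m := by
  have habs : ∀ j, ‖diffOp (unitVec (m+1)) j‖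
      = if j = m then ((m:ℝ)+1) else 0 := by
    intro j
    rw [abs_diffOp]
    by_cases h : j = m
    · subst h; simp [unitVec]
    · have : j + 1 ≠ m + 1 := by omega
      simp [unitVec, this, h]
  have hb : ∀ j, wt a k j * ‖diffOp (unitVec (m+1)) j‖ ≤ ((m:ℝ)+1) * wt a k m := by
    intro j
    rw [habs]
    by_cases h : j = m
    · subst h; rw [if_pos rfl, mul_comm]
    · have := wt_pos a k m
      simp only [if_neg h, mul_zero]; positivity
  refine le_antisymm (ciSup_le hb) ?_
  have := le_ciSup ⟨((m:ℝ)+1) * wt a k m, by rintro _ ⟨j, rfl⟩; exact hb j⟩ m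
    (f := fun j => wt a k j * ‖diffOp (unitVec (m+1)) j‖)
  rw [habs m, if_pos rfl] at this
  calc ((m:ℝ)+1) * wt a k m = wt a k m * ((m:ℝ)+1) := by ring
    _ ≤ _ := this

-- (2) → (1)
lemma two_to_one (a : ℕ → ℝ)
    (h2 : ∀ k : ℕ, ∃ l : ℕ, k < l ∧ ∃ M : ℝ, 0 < M ∧ ∀ n : ℕ,
        ((n : ℝ) + 1) * wt a k n ≤ M * wt a l (n + 1)) :
    (∀ x, memLambda a x → memLambda a (diffOp x)) ∧
        (∀ k : ℕ, ∃ l : ℕ, ∃ M : ℝ, 0 < M ∧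
          ∀ x, memLambda a x → pk a k (diffOp x) ≤ M * pk a l x) := by
  have key : ∀ k, ∃ l M, 0 < M ∧ ∀ x n, memLambda a x →
      wt a k n * ‖diffOp x n‖ ≤ M * (wt a l (n+1) * ‖x (n+1)‖) := by
    intro k
    obtain ⟨l, -, M, hM, h⟩ := h2 k
    refine ⟨l, M, hM, fun x n _ => ?_⟩
    rw [abs_diffOp]
    calc wt a k n * (((n:ℝ)+1) * ‖x (n+1)‖)
        = (((n:ℝ)+1) * wt a k n) * ‖x (n+1)‖ := by ring
      _ ≤ (M * wt a l (n+1)) * ‖x (n+1)‖ := by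
          exact mul_le_mul_of_nonneg_right (h n) (norm_nonneg _)
      _ = M * (wt a l (n+1) * ‖x (n+1)‖) := by ring
  constructor
  · intro x hx k
    obtain ⟨l, M, hM, hb⟩ := key k
    have hlim : Tendsto (fun n => M * (wt a l (n+1) * ‖x (n+1)‖)) atTop (𝓝 0) := by
      have := ((hx l).comp (tendsto_add_atTop_nat 1)).const_mul M
      simpa using this
    exact squeeze_zero (fun n => mul_nonneg (wt_pos a k n).le (norm_nonneg _)) (fun n => hb x n hx) hlim
  · intro k
    obtain ⟨l, M, hM, hb⟩ := key k
    refine ⟨l, M, hM, fun x hx => ?_⟩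
    have hbdd : BddAbove (Set.range fun n => wt a l n * ‖x n‖) :=
      (hx l).bddAbove_range
    apply ciSup_le
    intro n
    calc wt a k n * ‖diffOp x n‖
        ≤ M * (wt a l (n+1) * ‖x (n+1)‖) := hb x n hx
      _ ≤ M * pk a l x := by
          apply mul_le_mul_of_nonneg_left _ hM.le
          exact le_ciSup hbdd (n+1)

-- (1) → (2)
lemma one_to_two (a : ℕ → ℝ) (h1 : ∀ n, 1 < a n)
    (h : ∀ k : ℕ, ∃ l : ℕ, ∃ M : ℝ, 0 < M ∧
          ∀ x, memLambda a x → pk a k (diffOp x) ≤ M * pk a l x) :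
    ∀ k : ℕ, ∃ l : ℕ, k < l ∧ ∃ M : ℝ, 0 < M ∧ ∀ n : ℕ,
        ((n : ℝ) + 1) * wt a k n ≤ M * wt a l (n + 1) := by
  intro k
  obtain ⟨l, M, hM, hle⟩ := h k
  refine ⟨max l (k+1), by omega, M, hM, fun n => ?_⟩
  have := hle (unitVec (n+1)) (memLambda_unitVec a (n+1))
  rw [pk_diffOp_unitVec, pk_unitVec] at this
  calc ((n:ℝ)+1) * wt a k n ≤ M * wt a l (n+1) := this
    _ ≤ M * wt a (max l (k+1)) (n+1) :=
        mul_le_mul_of_nonneg_left (wt_mono a h1 (le_max_left _ _) _) hM.le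

lemma log_ineq (a : ℕ → ℝ) {k l M : ℝ} {n : ℕ} (hM : 0 < M) (wk wl : ℝ)
    (hwk : wk = Real.exp (-(a n)/k)) (hwl : wl = Real.exp (-(a (n+1))/l))
    (h : ((n:ℝ)+1) * wk ≤ M * wl) :
    Real.log ((n:ℝ)+1) - a n / k ≤ Real.log M - a (n+1) / l := by
  have hn1 : (0:ℝ) < (n:ℝ)+1 := by positivity
  have hL : Real.log (((n:ℝ)+1) * wk) ≤ Real.log (M * wl) :=
    Real.log_le_log (by rw [hwk]; positivity) h
  rw [hwk, hwl, Real.log_mul (ne_of_gt hn1) (Real.exp_ne_zero _),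
    Real.log_mul (ne_of_gt hM) (Real.exp_ne_zero _), Real.log_exp, Real.log_exp,
    neg_div, neg_div] at hL
  linarith [hL]

-- (2) → (3)
lemma two_to_three (a : ℕ → ℝ) (h1 : ∀ n, 1 < a n) (htop : Tendsto a atTop atTop)
    (h2 : ∀ k : ℕ, ∃ l : ℕ, k < l ∧ ∃ M : ℝ, 0 < M ∧ ∀ n : ℕ,
        ((n : ℝ) + 1) * wt a k n ≤ M * wt a l (n + 1)) :
    (Tendsto (fun n : ℕ => Real.log ((n : ℝ) + 1) / a n) atTop (𝓝 0)) ∧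
        ∃ C : ℝ, ∀ᶠ n in atTop, a (n + 1) / a n ≤ C := by
  have hapos : ∀ n, (0:ℝ) < a n := fun n => lt_trans one_pos (h1 n)
  constructor
  · rw [Metric.tendsto_atTop]
    intro ε hε
    obtain ⟨k, hk⟩ := exists_nat_one_div_lt (half_pos hε)
    obtain ⟨l, -, M, hM, h⟩ := h2 k
    -- log (n+1) ≤ log M + a n / (k+1)
    have key : ∀ n : ℕ, Real.log ((n:ℝ)+1) ≤ Real.log M + a n / ((k:ℝ)+1) := by
      intro n
      have := log_ineq a hM (wt a k n) (wt a l (n+1)) rfl rfl (h n)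
      have hpos : 0 < a (n+1) / ((l:ℝ)+1) := div_pos (hapos _) (by positivity)
      linarith
    have hMlim : Tendsto (fun n => Real.log M / a n) atTop (𝓝 0) :=
      Tendsto.div_atTop tendsto_const_nhds htop
    rw [Metric.tendsto_atTop] at hMlim
    obtain ⟨N, hN⟩ := hMlim (ε/2) (half_pos hε)
    refine ⟨N, fun n hn => ?_⟩
    have hq1 : Real.log ((n:ℝ)+1) / a n ≤ Real.log M / a n + 1/((k:ℝ)+1) := by
      rw [div_le_iff₀ (hapos n)]
      have h0 : a n ≠ 0 := ne_of_gt (hapos n)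
      have heq : (Real.log M / a n + 1/((k:ℝ)+1)) * a n = Real.log M + a n/((k:ℝ)+1) := by
        field_simp
      rw [heq]; exact key n
    have hq0 : 0 ≤ Real.log ((n:ℝ)+1) / a n := by
      apply div_nonneg _ (hapos n).le
      apply Real.log_nonneg; push_cast; linarith [Nat.cast_nonneg (α := ℝ) n]
    have hN' := hN n hn
    rw [Real.dist_eq, sub_zero] at hN' ⊢
    rw [abs_lt] at hN' ⊢
    constructor
    · linarith
    · calc Real.log ((n:ℝ)+1) / a n ≤ Real.log M / a n + 1/((k:ℝ)+1) := hq1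
        _ < ε/2 + ε/2 := by
            have := hN'.2
            linarith [hk]
        _ = ε := by ring
  · obtain ⟨l, -, M, hM, h⟩ := h2 0
    refine ⟨((l:ℝ)+1) * (|Real.log M| + 1), Eventually.of_forall fun n => ?_⟩
    have key := log_ineq a hM (wt a 0 n) (wt a l (n+1)) rfl rfl (h n)
    simp only [Nat.cast_zero, zero_add, div_one] at key
    have hlog0 : 0 ≤ Real.log ((n:ℝ)+1) := by
      apply Real.log_nonneg; push_cast; linarith [Nat.cast_nonneg (α := ℝ) n]
    have hl1 : (0:ℝ) < (l:ℝ)+1 := by positivity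
    have hupper : a (n+1) ≤ ((l:ℝ)+1) * (Real.log M + a n) := by
      have h2' : a (n+1)/((l:ℝ)+1) ≤ Real.log M + a n := by linarith
      calc a (n+1) = (a (n+1)/((l:ℝ)+1))*((l:ℝ)+1) := by field_simp
        _ ≤ (Real.log M + a n)*((l:ℝ)+1) := mul_le_mul_of_nonneg_right h2' hl1.le
        _ = ((l:ℝ)+1)*(Real.log M + a n) := by ring
    rw [div_le_iff₀ (hapos n)]
    have h1n := (h1 n).le
    have habs : Real.log M ≤ |Real.log M| := le_abs_self _
    have hstep : Real.log M + a n ≤ (|Real.log M| + 1) * a n := by nlinarith [abs_nonneg (Real.log M)]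
    calc a (n+1) ≤ ((l:ℝ)+1) * (Real.log M + a n) := hupper
      _ ≤ ((l:ℝ)+1) * ((|Real.log M| + 1) * a n) := mul_le_mul_of_nonneg_left hstep hl1.le
      _ = ((l:ℝ)+1) * (|Real.log M| + 1) * a n := by ring

-- (3) → (2)
lemma three_to_two (a : ℕ → ℝ) (h1 : ∀ n, 1 < a n)
    (hlog : Tendsto (fun n : ℕ => Real.log ((n : ℝ) + 1) / a n) atTop (𝓝 0))
    (hC : ∃ C : ℝ, ∀ᶠ n in atTop, a (n + 1) / a n ≤ C) :
    ∀ k : ℕ, ∃ l : ℕ, k < l ∧ ∃ M : ℝ, 0 < M ∧ ∀ n : ℕ,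
        ((n : ℝ) + 1) * wt a k n ≤ M * wt a l (n + 1) := by
  have hapos : ∀ n, (0:ℝ) < a n := fun n => lt_trans one_pos (h1 n)
  obtain ⟨C, hCev⟩ := hC
  set C' : ℝ := max C 1 with hC'
  have hC1 : (1:ℝ) ≤ C' := le_max_right _ _
  have hC0 : (0:ℝ) < C' := lt_of_lt_of_le one_pos hC1
  intro k
  set l : ℕ := k + 1 + ⌈2*C'*((k:ℝ)+1)⌉₊ with hl
  have hlk : k < l := by omega
  have hlge : 2*C'*((k:ℝ)+1) ≤ (l:ℝ)+1 := by
    calc 2*C'*((k:ℝ)+1) ≤ (⌈2*C'*((k:ℝ)+1)⌉₊ : ℝ) := Nat.le_ceil _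
      _ ≤ (l:ℝ)+1 := by
        have hnat : ⌈2*C'*((k:ℝ)+1)⌉₊ ≤ l := by omega
        have : (⌈2*C'*((k:ℝ)+1)⌉₊ : ℝ) ≤ (l : ℝ) := Nat.cast_le.2 hnat
        linarith
  -- eventual bound
  have hlogev : ∀ᶠ n : ℕ in atTop, Real.log ((n:ℝ)+1) ≤ a n / (2*((k:ℝ)+1)) := by
    have hev := hlog.eventually_le_const (show (0:ℝ) < 1/(2*((k:ℝ)+1)) by positivity)
    filter_upwards [hev] with n hn
    rw [div_le_iff₀ (hapos n)] at hn
    calc Real.log ((n:ℝ)+1) ≤ 1/(2*((k:ℝ)+1)) * a n := hn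
      _ = a n / (2*((k:ℝ)+1)) := by ring
  have hCev' : ∀ᶠ n : ℕ in atTop, a (n+1) ≤ C' * a n := by
    filter_upwards [hCev] with n hn
    have : a (n+1) / a n ≤ C' := le_trans hn (le_max_left _ _)
    calc a (n+1) = (a (n+1) / a n) * a n := (div_mul_cancel₀ _ (ne_of_gt (hapos n))).symm
      _ ≤ C' * a n := mul_le_mul_of_nonneg_right this (hapos n).le
  obtain ⟨N, hN⟩ := eventually_atTop.1 (hlogev.and hCev')
  -- good tail bound with constant 1
  have tail : ∀ n ≥ N, ((n:ℝ)+1) * wt a k n ≤ 1 * wt a l (n+1) := by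
    intro n hn
    obtain ⟨hlogn, hCn⟩ := hN n hn
    have hexp : Real.log ((n:ℝ)+1) + a (n+1) / ((l:ℝ)+1) ≤ a n / ((k:ℝ)+1) := by
      have hb1 : a (n+1) / ((l:ℝ)+1) ≤ a n / (2*((k:ℝ)+1)) := by
        have h2 : a (n+1) / ((l:ℝ)+1) ≤ (C' * a n) / ((l:ℝ)+1) :=
          div_le_div_of_nonneg_right hCn (by positivity)
        have h3 : (C' * a n) / ((l:ℝ)+1) ≤ (C' * a n) / (2*C'*((k:ℝ)+1)) :=
          div_le_div_of_nonneg_left (mul_nonneg hC0.le (hapos n).le)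
            (mul_pos (mul_pos two_pos hC0) (show (0:ℝ) < (k:ℝ)+1 by positivity)) hlge
        have h4 : (C' * a n) / (2*C'*((k:ℝ)+1)) = a n / (2*((k:ℝ)+1)) := by
          field_simp
        linarith
      have : a n / ((k:ℝ)+1) = a n / (2*((k:ℝ)+1)) + a n / (2*((k:ℝ)+1)) := by
        field_simp; ring
      linarith
    have hn1 : (0:ℝ) < (n:ℝ)+1 := by positivity
    rw [one_mul, wt, wt]
    calc ((n:ℝ)+1) * Real.exp (-(a n)/((k:ℝ)+1))
        = Real.exp (Real.log ((n:ℝ)+1) + -(a n)/((k:ℝ)+1)) := by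
          rw [Real.exp_add, Real.exp_log hn1]
      _ ≤ Real.exp (-(a (n+1))/((l:ℝ)+1)) := by
          apply Real.exp_le_exp.2
          rw [neg_div, neg_div]
          linarith
  -- absorb head into constant
  have hS : 0 ≤ ∑ j ∈ Finset.range N, ((j:ℝ)+1) * wt a k j / wt a l (j+1) :=
    Finset.sum_nonneg fun j _ => div_nonneg (mul_nonneg (by positivity) (wt_pos a k j).le) (wt_pos a l (j+1)).le
  set M : ℝ := 1 + ∑ j ∈ Finset.range N, ((j:ℝ)+1) * wt a k j / wt a l (j+1) with hM
  have hMpos : 0 < M := by rw [hM]; linarith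
  have hM1 : (1:ℝ) ≤ M := by rw [hM]; linarith
  refine ⟨l, hlk, M, hMpos, fun n => ?_⟩
  by_cases hn : N ≤ n
  · calc ((n:ℝ)+1) * wt a k n ≤ 1 * wt a l (n+1) := tail n hn
      _ ≤ M * wt a l (n+1) := mul_le_mul_of_nonneg_right hM1 (wt_pos a l (n+1)).le
  · push_neg at hn
    have hterm : ((n:ℝ)+1) * wt a k n / wt a l (n+1) ≤ M := by
      have hle : ((n:ℝ)+1) * wt a k n / wt a l (n+1)
          ≤ ∑ j ∈ Finset.range N, ((j:ℝ)+1) * wt a k j / wt a l (j+1) :=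
        Finset.single_le_sum (f := fun j : ℕ => ((j:ℝ)+1) * wt a k j / wt a l (j+1))
          (fun j _ => div_nonneg (mul_nonneg (by positivity) (wt_pos a k j).le) (wt_pos a l (j+1)).le)
          (Finset.mem_range.2 hn)
      rw [hM]; linarith
    calc ((n:ℝ)+1) * wt a k n
        = (((n:ℝ)+1) * wt a k n / wt a l (n+1)) * wt a l (n+1) :=
          (div_mul_cancel₀ _ (ne_of_gt (wt_pos a l (n+1)))).symm
      _ ≤ M * wt a l (n+1) := mul_le_mul_of_nonneg_right hterm (wt_pos a l (n+1)).le

/-- the following are equivalent: (a) the differentiation operator `D`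
maps `Λ₀(α)` into itself and is continuous; (b) for each `k` there are `l > k` and
`M > 0` with `n e^{-α_n/k} ≤ M e^{-α_{n+1}/l}` for all `n`; (c) `(log n)/α_n → 0`
(nuclearity) and `limsup α_{n+1}/α_n < ∞` (shift stability). -/
theorem stmt7 (a : ℕ → ℝ) (hmono : StrictMono a) (h1 : ∀ n, 1 < a n)
    (htop : Tendsto a atTop atTop) :
    [ (∀ x, memLambda a x → memLambda a (diffOp x)) ∧
        (∀ k : ℕ, ∃ l : ℕ, ∃ M : ℝ, 0 < M ∧
          ∀ x, memLambda a x → pk a k (diffOp x) ≤ M * pk a l x),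
      ∀ k : ℕ, ∃ l : ℕ, k < l ∧ ∃ M : ℝ, 0 < M ∧ ∀ n : ℕ,
        ((n : ℝ) + 1) * wt a k n ≤ M * wt a l (n + 1),
      (Tendsto (fun n : ℕ => Real.log ((n : ℝ) + 1) / a n) atTop (𝓝 0)) ∧
        ∃ C : ℝ, ∀ᶠ n in atTop, a (n + 1) / a n ≤ C ].TFAE := by
  tfae_have 1 → 2 := fun h => one_to_two a h1 h.2
  tfae_have 2 → 1 := two_to_one a
  tfae_have 2 → 3 := two_to_three a h1 htop
  tfae_have 3 → 2 := fun h => three_to_two a h1 h.1 h.2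
  tfae_finish
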